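/- arXiv:cs/0207040 — 5 statements merged into one kernel-verified Lean document; each statement's English description precedes it below -/
import Mathlib

section
/- If x' ⊆ x and y ⊆ y' are binary relations on a set of arguments, then the least fixpoint of F_{x/y} is contained in the least fixpoint of F_{x'/y'}; that is, weakening the opponent's attack relation or strengthening the proponent's defence relation enlarges the set of justified arguments. -/
/-- The set of `x/y`-acceptable arguments with respect to `S`. -/
def Facc {Arg : Type*} (x y : Arg → Arg → Prop) (S : Set Arg) : Set Arg :=
  {A | ∀ B, x B A → ∃ C ∈ S, y C B}

theorem Facc_mono {Arg : Type*} (x y : Arg → Arg → Prop) : Monotone (Facc x y) := by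
  intro S T hST A hA B hB
  obtain ⟨C, hC, hCB⟩ := hA B hB
  exact ⟨C, hST hC, hCB⟩

/-- `Facc` as an order homomorphism. -/
def Fhom {Arg : Type*} (x y : Arg → Arg → Prop) : Set Arg →o Set Arg :=
  ⟨Facc x y, Facc_mono x y⟩

/-- The least-fixpoint argumentation semantics: the set of `x/y`-justified arguments. -/
def Jlfp {Arg : Type*} (x y : Arg → Arg → Prop) : Set Arg :=
  OrderHom.lfp (Fhom x y)

/-- Weakening the attack relation or strengthening the defence relation
enlarges the set of justified arguments. -/
theorem Jlfp_mono {Arg : Type*} (x x' y y' : Arg → Arg → Prop)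
    (hx : ∀ A B, x' A B → x A B) (hy : ∀ A B, y A B → y' A B) :
    Jlfp x y ⊆ Jlfp x' y' := by
  have h : Jlfp x y ≤ Jlfp x' y' := by
    apply OrderHom.lfp_le
    intro A hA
    have hfix : Fhom x' y' (Jlfp x' y') = Jlfp x' y' := OrderHom.map_lfp _
    rw [← hfix]
    intro B hB
    obtain ⟨C, hC, hCB⟩ := hA B (hx B A hB)
    exact ⟨C, hC, hy C B hCB⟩
  exact h
end

section
/- Let u, x, y be binary relations on a set of arguments with u ⊆ x, and let sy = y - u⁻¹. Then the least fixpoints of F_{x/y} and F_{x/sy} coincide: J_{x/y} = J_{x/sy}. -/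
/-- Strong defence suffices: if `u ⊆ x` and `sy = y - u⁻¹`, then
`J_{x/y} = J_{x/sy}`. -/
theorem Jlfp_strong_defence {Arg : Type*} (u x y sy : Arg → Arg → Prop)
    (hux : ∀ A B, u A B → x A B)
    (hsy : ∀ A B, sy A B ↔ y A B ∧ ¬ u B A) :
    Jlfp x y = Jlfp x sy := by
  apply le_antisymm
  · -- lfp sy is a prefixpoint of Facc x y, so lfp y ≤ lfp sy
    apply OrderHom.lfp_le
    intro A hA
    rw [Jlfp, ← OrderHom.map_lfp (Fhom x sy)]
    intro B hB
    obtain ⟨C, hC, hCB⟩ := hA B hB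
    by_cases hu : u B C
    · have hxBC : x B C := hux B C hu
      have hC' : C ∈ Facc x sy (Jlfp x sy) := by
        rw [Jlfp, ← OrderHom.map_lfp (Fhom x sy)] at hC
        exact hC
      exact hC' B hxBC
    · exact ⟨C, hC, (hsy C B).mpr ⟨hCB, hu⟩⟩
  · apply OrderHom.lfp_le
    intro A hA
    rw [Jlfp, ← OrderHom.map_lfp (Fhom x y)]
    intro B hB
    obtain ⟨C, hC, hCB⟩ := hA B hB
    exact ⟨C, hC, ((hsy C B).mp hCB).1⟩
end

section
/- Let u, r be binary relations on a set of arguments, a = u ∪ r, d = u ∪ (r - u⁻¹), sa = a - u⁻¹, and let x be a relation with u ⊆ x. Then J_{x/a} = J_{x/d} = J_{x/sa}. -/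
/-- `Facc` is antitone-ish in `y`: enlarging `y` enlarges the acceptable set. -/
theorem Facc_mono_y {Arg : Type*} (x y y' : Arg → Arg → Prop)
    (h : ∀ A B, y A B → y' A B) (S : Set Arg) : Facc x y S ⊆ Facc x y' S := by
  intro A hA B hB
  obtain ⟨C, hC, hCB⟩ := hA B hB
  exact ⟨C, hC, h _ _ hCB⟩

theorem Jlfp_mono_y {Arg : Type*} (x y y' : Arg → Arg → Prop)
    (h : ∀ A B, y A B → y' A B) : Jlfp x y ⊆ Jlfp x y' := by
  apply OrderHom.lfp_le
  calc Facc x y (Jlfp x y') ⊆ Facc x y' (Jlfp x y') := Facc_mono_y x y y' h _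
    _ = Jlfp x y' := OrderHom.map_lfp (Fhom x y')

/-- If `u ⊆ x`, then attack, defeat and strong attack coincide as defence:
`J_{x/a} = J_{x/d} = J_{x/sa}`. -/
theorem Jlfp_att_def_satt_defence {Arg : Type*} (u r x a d sa : Arg → Arg → Prop)
    (ha : ∀ A B, a A B ↔ u A B ∨ r A B)
    (hd : ∀ A B, d A B ↔ u A B ∨ (r A B ∧ ¬ u B A))
    (hsa : ∀ A B, sa A B ↔ a A B ∧ ¬ u B A)
    (hux : ∀ A B, u A B → x A B) :
    Jlfp x a = Jlfp x d ∧ Jlfp x d = Jlfp x sa := by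
  have hsad : ∀ A B, sa A B → d A B := by
    intro A B h
    obtain ⟨hab, hnu⟩ := (hsa A B).1 h
    rcases (ha A B).1 hab with h' | h'
    · exact (hd A B).2 (Or.inl h')
    · exact (hd A B).2 (Or.inr ⟨h', hnu⟩)
  have hda : ∀ A B, d A B → a A B := by
    intro A B h
    rcases (hd A B).1 h with h' | h'
    · exact (ha A B).2 (Or.inl h')
    · exact (ha A B).2 (Or.inr h'.1)
  set L := Jlfp x sa with hLdef
  have hL : Facc x sa L = L := OrderHom.map_lfp (Fhom x sa)
  have key : Facc x a L ⊆ L := by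
    intro A hA
    rw [← hL]
    intro B hB
    obtain ⟨C, hC, hCB⟩ := hA B hB
    by_cases huBC : u B C
    · have hC' : C ∈ Facc x sa L := by rw [hL]; exact hC
      exact hC' B (hux B C huBC)
    · exact ⟨C, hC, (hsa C B).2 ⟨hCB, huBC⟩⟩
  have h1 : Jlfp x a ⊆ L := OrderHom.lfp_le (Fhom x a) key
  have h2 : L ⊆ Jlfp x d := Jlfp_mono_y x sa d hsad
  have h3 : Jlfp x d ⊆ Jlfp x a := Jlfp_mono_y x d a hda
  have e1 : Jlfp x a = L := Set.Subset.antisymm h1 (h2.trans h3)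
  have e2 : Jlfp x d = L := Set.Subset.antisymm ((h3.trans h1)) h2
  exact ⟨e1.trans e2.symm, e2⟩
end

section
/- Let u, r be binary relations on a set of arguments with r symmetric, su = u - u⁻¹, sa = (u ∪ r) - u⁻¹. Then J_{sa/su} = J_{sa/sa}. -/
/-- `J_{sa/su} = J_{sa/sa}` for symmetric rebut. -/
theorem Jlfp_sasu_sasa {Arg : Type*} (u r su sa : Arg → Arg → Prop)
    (hr : ∀ A B, r A B → r B A)
    (hsu : ∀ A B, su A B ↔ u A B ∧ ¬ u B A)
    (hsa : ∀ A B, sa A B ↔ (u A B ∨ r A B) ∧ ¬ u B A) :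
    Jlfp sa su = Jlfp sa sa := by
  have hsub : ∀ A B, su A B → sa A B := by
    intro A B h
    rw [hsu] at h
    exact (hsa A B).mpr ⟨Or.inl h.1, h.2⟩
  apply le_antisymm
  · -- lfp sasu ≤ lfp sasa : lfp sasa is a prefixpoint of Fhom sa su
    apply OrderHom.lfp_le
    have : Facc sa su (Jlfp sa sa) ≤ Facc sa sa (Jlfp sa sa) := by
      intro A hA B hB
      obtain ⟨C, hC, hCB⟩ := hA B hB
      exact ⟨C, hC, hsub C B hCB⟩
    calc Facc sa su (Jlfp sa sa) ≤ Facc sa sa (Jlfp sa sa) := this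
      _ = Jlfp sa sa := OrderHom.map_lfp (Fhom sa sa)
  · -- lfp sasa ≤ lfp sasu : J := lfp sasu is a prefixpoint of Fhom sa sa
    apply OrderHom.lfp_le
    have hJ : Facc sa su (Jlfp sa su) = Jlfp sa su := OrderHom.map_lfp (Fhom sa su)
    intro A hA
    rw [← hJ]
    intro B hB
    obtain ⟨C, hC, hCB⟩ := hA B hB
    -- hCB : sa C B ; need some D ∈ J with su D B
    rw [hsa] at hCB
    obtain ⟨h1, h2⟩ := hCB
    by_cases huCB : u C B
    · exact ⟨C, hC, (hsu C B).mpr ⟨huCB, h2⟩⟩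
    · have hrCB : r C B := h1.resolve_left huCB
      have hsaBC : sa B C := (hsa B C).mpr ⟨Or.inr (hr C B hrCB), huCB⟩
      have hC' : C ∈ Facc sa su (Jlfp sa su) := by rw [hJ]; exact hC
      exact hC' B hsaBC
end

section
/- Let u, r be binary relations on a set of arguments with r symmetric, su = u - u⁻¹, a = u ∪ r, d = u ∪ (r - u⁻¹). Then J_{su/a} = J_{su/d}. -/
/-- `J_{su/a} = J_{su/d}` for symmetric rebut. -/
theorem Jlfp_sua_sud {Arg : Type*} (u r su a d : Arg → Arg → Prop)
    (hr : ∀ A B, r A B → r B A)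
    (hsu : ∀ A B, su A B ↔ u A B ∧ ¬ u B A)
    (ha : ∀ A B, a A B ↔ u A B ∨ r A B)
    (hd : ∀ A B, d A B ↔ u A B ∨ (r A B ∧ ¬ u B A)) :
    Jlfp su a = Jlfp su d := by
  apply le_antisymm
  · -- lfp a ≤ lfp d : show lfp d is a prefixpoint of Fhom su a
    apply OrderHom.lfp_le
    intro A hA
    have hfix : Facc su d (Jlfp su d) = Jlfp su d :=
      OrderHom.map_lfp (Fhom su d)
    rw [← hfix]
    intro B hB
    obtain ⟨C, hC, hCB⟩ := hA B hB
    rcases (ha C B).mp hCB with huCB | hrCB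
    · exact ⟨C, hC, (hd C B).mpr (Or.inl huCB)⟩
    · by_cases huBC : u B C
      · by_cases huCB : u C B
        · exact ⟨C, hC, (hd C B).mpr (Or.inl huCB)⟩
        · -- su B C, so C (in the fixpoint) has a defender against B
          have hsuBC : su B C := (hsu B C).mpr ⟨huBC, huCB⟩
          have hC' : C ∈ Facc su d (Jlfp su d) := by rw [hfix]; exact hC
          exact hC' B hsuBC
      · exact ⟨C, hC, (hd C B).mpr (Or.inr ⟨hrCB, huBC⟩)⟩
  · -- lfp d ≤ lfp a : d ⊆ a
    apply OrderHom.lfp_le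
    intro A hA
    have hfix : Facc su a (Jlfp su a) = Jlfp su a :=
      OrderHom.map_lfp (Fhom su a)
    rw [← hfix]
    intro B hB
    obtain ⟨C, hC, hCB⟩ := hA B hB
    refine ⟨C, hC, (ha C B).mpr ?_⟩
    rcases (hd C B).mp hCB with h | h
    · exact Or.inl h
    · exact Or.inr h.1
end
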